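/- Let a : Fin k → L be a configuration over a finite lattice L whose values are pairwise comparable (for all i, j, either a i ≤ a j or a j ≤ a i). Then every combination of a with itself (with respect to any permutation φ of Fin k and any index u) is dominated by the configuration of a. -/
import Mathlib

namespace RoundElim

/-- The configuration (multiset of cardinality `k`) associated to a function `Fin k → α`. -/
def ofFn {α : Type*} {k : ℕ} (f : Fin k → α) : Multiset α :=
  (List.ofFn f : List α)

/-- The combination of the representatives `a`, `b` with respect to the permutation `φ`
and the index `u`: supremum at position `u`, infimum everywhere else. -/
def combineL {L : Type*} [Lattice L] {k : ℕ} (a b : Fin k → L)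
    (φ : Equiv.Perm (Fin k)) (u : Fin k) : Fin k → L :=
  fun i => if i = u then a i ⊔ b (φ i) else a i ⊓ b (φ i)


lemma ofFn_eq_map {α : Type*} {k : ℕ} (f : Fin k → α) :
    ofFn f = Multiset.map f Finset.univ.val := by
  simp [ofFn, List.ofFn_eq_map, Fin.univ_def, Finset.univ]
  rfl

lemma ofFn_comp_perm {α : Type*} {k : ℕ} (f : Fin k → α) (σ : Equiv.Perm (Fin k)) :
    ofFn (f ∘ σ) = ofFn f := by
  rw [ofFn_eq_map, ofFn_eq_map, ← Multiset.map_map]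
  congr 1
  have : Finset.univ.val.map σ = (Finset.univ.map σ.toEmbedding).val := rfl
  rw [this, Finset.map_univ_equiv]

lemma rel_of_forall {α β : Type*} {r : α → β → Prop} {k : ℕ} (f : Fin k → α) (g : Fin k → β)
    (h : ∀ i, r (f i) (g i)) : Multiset.Rel r (ofFn f) (ofFn g) := by
  rw [ofFn_eq_map, ofFn_eq_map, Multiset.rel_map]
  exact Multiset.rel_refl_of_refl_on (fun x _ => h x)

/-- If the values of `a` are pairwise comparable, then every combination of `a` with itself is
dominated by the configuration of `a`. -/
theorem self_combination_dominated {L : Type*} [Lattice L] [Fintype L]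
    {k : ℕ} (hk : 0 < k) (a : Fin k → L)
    (hcomp : ∀ i j : Fin k, a i ≤ a j ∨ a j ≤ a i)
    (φ : Equiv.Perm (Fin k)) (u : Fin k) :
    Multiset.Rel (· ≤ ·) (ofFn (combineL a a φ u)) (ofFn a) := by
  rcases hcomp (φ u) u with h | h
  · refine rel_of_forall _ _ fun i => ?_
    by_cases hi : i = u
    · subst hi; simpa [combineL] using h
    · simp [combineL, hi, inf_le_left]
  · rw [show ofFn a = ofFn (a ∘ φ) from (ofFn_comp_perm a φ).symm]
    refine rel_of_forall _ _ fun i => ?_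
    by_cases hi : i = u
    · subst hi; simpa [combineL] using h
    · simp [combineL, hi, inf_le_right]

end RoundElim
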